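/- For 0 < i < n and any τ ∈ S_n, the i-th face φ(τ)∘∂_i : [n−1] → {0,1}^n has, in each coordinate m, neither constant value 0 nor constant value 1; equivalently, the inner faces of a nondegenerate n-simplex of the n-cube are not contained in any coordinate face Δ^1×⋯×{ε}×⋯×Δ^1 of the boundary of the cube. -/
import Mathlib


/-- The n-simplex phi(tau) of the n-cube associated with a permutation tau of
{1, ..., n} (encoded 0-based as `Equiv.Perm (Fin n)`): its i-th coordinate is the
monotone map `a^{tau(i)} : [n] -> {0,1}`, sending k to 0 iff k < tau(i) (1-based),
i.e. iff k <= tau(i) (0-based). -/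
def phi (n : ℕ) (τ : Equiv.Perm (Fin n)) : Fin (n + 1) → Fin n → Fin 2 :=
  fun k i => if (k : ℕ) ≤ (τ i : ℕ) then 0 else 1

/-- for 0 < i < n and any permutation tau, the i-th face
phi(tau) . d_i : [n-1] -> {0,1}^n has, in each coordinate m, neither constant value 0
nor constant value 1; i.e. the inner faces of a nondegenerate n-simplex of the n-cube
are not contained in any coordinate face of the boundary of the cube. -/
theorem stmt_10 (n i : ℕ) (h0 : 0 < i) (hn : i < n) (τ : Equiv.Perm (Fin n))
    (m : Fin n) :
    (∃ k : Fin n, phi n τ ((⟨i, by omega⟩ : Fin (n + 1)).succAbove k) m ≠ 0) ∧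
    (∃ k : Fin n, phi n τ ((⟨i, by omega⟩ : Fin (n + 1)).succAbove k) m ≠ 1) := by
  have hm := (τ m).isLt
  constructor
  · refine ⟨⟨n - 1, by omega⟩, ?_⟩
    have : ((⟨i, by omega⟩ : Fin (n + 1)).succAbove ⟨n - 1, by omega⟩ : ℕ) = n := by
      simp only [Fin.succAbove]
      split_ifs with h <;> simp_all [Fin.lt_def] <;> omega
    simp [phi, this]
  · refine ⟨⟨0, by omega⟩, ?_⟩
    have : ((⟨i, by omega⟩ : Fin (n + 1)).succAbove ⟨0, by omega⟩ : ℕ) = 0 := by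
      simp only [Fin.succAbove]
      split_ifs with h <;> simp_all [Fin.lt_def] <;> omega
    simp [phi, this]
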